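/- Let v₁, v₂ ∈ ℝ² be linearly independent vectors, and let a, b, c be the point reflections of ℝ² given by a(x) = v₁ − x, b(x) = (v₁ + v₂) − x, c(x) = v₂ − x. Then the subgroup of the group of affine equivalences of ℝ² generated by {a, b, c} is isomorphic to the semidirect product (ℤ × ℤ) ⋊ ℤ/2ℤ, where the nontrivial element of ℤ/2ℤ acts on ℤ × ℤ by negation. -/

import Mathlib

/-- The action of `ℤ/2ℤ` on a commutative group `M` in which the nontrivial element
acts by inversion (negation, in additive language). -/
def negAct (M : Type*) [CommGroup M] : Multiplicative (ZMod 2) →* MulAut M where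
  toFun g := if Multiplicative.toAdd g = 0 then 1 else MulEquiv.inv M
  map_one' := by simp
  map_mul' g h := by
    have hinv : MulEquiv.inv M * MulEquiv.inv M = 1 := by
      ext x; simp
    by_cases hg : Multiplicative.toAdd g = 0 <;> by_cases hh : Multiplicative.toAdd h = 0
    · simp [hg, hh]
    · simp [hg, hh]
    · simp [hg, hh]
    · have h1 : ∀ x : ZMod 2, x ≠ 0 → x = 1 := by decide
      have h2 : (1 : ZMod 2) + 1 = 0 := by decide
      have : Multiplicative.toAdd (g * h) = 0 := by
        simp [h1 _ hg, h1 _ hh, h2]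
      simp [this, hg, hh, hinv]

section Aux

abbrev G2 := (ℝ × ℝ) ≃ᵃ[ℝ] (ℝ × ℝ)

/-- the additive hom `(m,n) ↦ m•v₁+n•v₂` -/
def LL (v₁ v₂ : ℝ × ℝ) : ℤ × ℤ →+ ℝ × ℝ where
  toFun p := p.1 • v₁ + p.2 • v₂
  map_zero' := by simp
  map_add' p q := by simp [add_smul]; abel

/-- translations along the lattice generated by `v₁, v₂` -/
noncomputable def fN (v₁ v₂ : ℝ × ℝ) : Multiplicative (ℤ × ℤ) →* G2 :=
  (AffineEquiv.constVAddHom ℝ (ℝ × ℝ)).comp (AddMonoidHom.toMultiplicative (LL v₁ v₂))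

lemma fN_apply (v₁ v₂ : ℝ × ℝ) (p : ℤ × ℤ) (x : ℝ × ℝ) :
    fN v₁ v₂ (Multiplicative.ofAdd p) x = p.1 • v₁ + p.2 • v₂ + x := by
  show (p.1 • v₁ + p.2 • v₂) +ᵥ x = _
  rfl

/-- the involution sending the nontrivial element of `ℤ/2` to `a` -/
noncomputable def fH (a : G2) (ha2 : a * a = 1) : Multiplicative (ZMod 2) →* G2 where
  toFun g := if Multiplicative.toAdd g = 0 then 1 else a
  map_one' := by simp
  map_mul' g h := by
    by_cases hg : Multiplicative.toAdd g = 0 <;> by_cases hh : Multiplicative.toAdd h = 0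
    · simp [hg, hh]
    · simp [hg, hh]
    · simp [hg, hh]
    · have h1 : ∀ x : ZMod 2, x ≠ 0 → x = 1 := by decide
      have h2 : (1 : ZMod 2) + 1 = 0 := by decide
      have : Multiplicative.toAdd (g * h) = 0 := by
        simp [h1 _ hg, h1 _ hh, h2]
      simp [this, hg, hh, ha2]

end Aux

theorem stmt_9 (v₁ v₂ : ℝ × ℝ) (hv : LinearIndependent ℝ ![v₁, v₂])
    (a b c : (ℝ × ℝ) ≃ᵃ[ℝ] (ℝ × ℝ))
    (ha : ∀ x : ℝ × ℝ, a x = v₁ - x)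
    (hb : ∀ x : ℝ × ℝ, b x = (v₁ + v₂) - x)
    (hc : ∀ x : ℝ × ℝ, c x = v₂ - x) :
    Nonempty
      ((Subgroup.closure ({a, b, c} : Set ((ℝ × ℝ) ≃ᵃ[ℝ] (ℝ × ℝ)))) ≃*
        (Multiplicative (ℤ × ℤ) ⋊[negAct (Multiplicative (ℤ × ℤ))]
          Multiplicative (ZMod 2))) := by
  have ha2 : a * a = 1 := AffineEquiv.ext fun x => by
    simp [AffineEquiv.coe_mul, ha]
  have hainv : a⁻¹ = a := by
    rw [eq_comm, eq_inv_iff_mul_eq_one, ha2]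
  have hg01 : ∀ g : Multiplicative (ZMod 2),
      g = 1 ∨ (g = Multiplicative.ofAdd 1 ∧ Multiplicative.toAdd g ≠ 0) := by decide
  -- key conjugation identity
  have key : ∀ n : Multiplicative (ℤ × ℤ),
      fN v₁ v₂ n⁻¹ = a * fN v₁ v₂ n * a⁻¹ := by
    intro n
    rw [hainv]
    refine AffineEquiv.ext fun x => ?_
    have e1 := fN_apply v₁ v₂ (-(Multiplicative.toAdd n)) x
    have e2 := fN_apply v₁ v₂ (Multiplicative.toAdd n) (a x)
    rw [ofAdd_neg, ofAdd_toAdd] at e1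
    simp only [Prod.fst_neg, Prod.snd_neg, neg_smul] at e1
    rw [ofAdd_toAdd] at e2
    simp only [AffineEquiv.coe_mul, Function.comp_apply]
    rw [e1, e2, ha, ha]
    abel
  -- compatibility for the lift
  have compat : ∀ g : Multiplicative (ZMod 2),
      (fN v₁ v₂).comp ((negAct (Multiplicative (ℤ × ℤ)) g).toMonoidHom)
        = (MulAut.conj (fH a ha2 g)).toMonoidHom.comp (fN v₁ v₂) := by
    intro g
    rcases hg01 g with rfl | ⟨rfl, hg⟩
    · refine MonoidHom.ext fun n => ?_
      simp [negAct, fH]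
    · refine MonoidHom.ext fun n => ?_
      simp only [negAct, fH, hg, if_neg, MonoidHom.comp_apply, MulEquiv.coe_toMonoidHom,
        MulAut.conj_apply, if_false, MulEquiv.inv_apply]
      exact key n
  set φ : (Multiplicative (ℤ × ℤ) ⋊[negAct (Multiplicative (ℤ × ℤ))]
      Multiplicative (ZMod 2)) →* G2 :=
    SemidirectProduct.lift (fN v₁ v₂) (fH a ha2) compat with hφ
  have hφinl : ∀ n, φ (SemidirectProduct.inl n) = fN v₁ v₂ n := fun n => by
    simp [hφ]
  have hφinr : ∀ g, φ (SemidirectProduct.inr g) = fH a ha2 g := fun g => by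
    simp [hφ]
  have hv1 : v₁ ≠ 0 := by
    have := hv.ne_zero 0; simpa using this
  have hpair := LinearIndependent.pair_iff.mp hv
  -- injectivity
  have hinj : Function.Injective φ := by
    refine (injective_iff_map_eq_one _).mpr ?_
    rintro ⟨n, g⟩ hx
    rw [SemidirectProduct.mk_eq_inl_mul_inr, map_mul, hφinl, hφinr] at hx
    rcases hg01 g with rfl | ⟨rfl, hg⟩
    · rw [map_one, mul_one] at hx
      have h0 : fN v₁ v₂ n 0 = (1 : G2) 0 := by rw [hx]
      have e := fN_apply v₁ v₂ (Multiplicative.toAdd n) 0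
      rw [ofAdd_toAdd] at e
      rw [e] at h0
      simp only [AffineEquiv.coe_one, id_eq, add_zero] at h0
      have h0' : ((Multiplicative.toAdd n).1 : ℝ) • v₁
          + ((Multiplicative.toAdd n).2 : ℝ) • v₂ = 0 := by
        rw [Int.cast_smul_eq_zsmul, Int.cast_smul_eq_zsmul]; exact h0
      obtain ⟨e1, e2⟩ := hpair _ _ h0'
      have hn1 : (Multiplicative.toAdd n).1 = 0 := by exact_mod_cast e1
      have hn2 : (Multiplicative.toAdd n).2 = 0 := by exact_mod_cast e2
      have hn : n = 1 := by
        have : Multiplicative.toAdd n = 0 := Prod.ext hn1 hn2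
        rw [← ofAdd_toAdd n, this, ofAdd_zero]
      rw [hn]
      rfl
    · exfalso
      have hfa : fH a ha2 (Multiplicative.ofAdd 1) = a := by
        simp only [fH, MonoidHom.coe_mk, OneHom.coe_mk, hg, if_neg]
        simp
      rw [hfa] at hx
      set p := Multiplicative.toAdd n with hp
      have e0 : (fN v₁ v₂ n * a) 0 = (1 : G2) 0 := by rw [hx]
      have e1 : (fN v₁ v₂ n * a) v₁ = (1 : G2) v₁ := by rw [hx]
      have efn := fun y => fN_apply v₁ v₂ p y
      rw [hp, ofAdd_toAdd] at efn
      simp only [AffineEquiv.coe_mul, Function.comp_apply, AffineEquiv.coe_one, id_eq,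
        ha, efn, sub_zero, sub_self, add_zero] at e0 e1
      -- e0 : p.1 • v₁ + p.2 • v₂ + v₁ = 0, e1 : p.1 • v₁ + p.2 • v₂ = v₁
      rw [e1] at e0
      have h2 : (2 : ℝ) • v₁ = 0 := by rw [two_smul]; exact e0
      rcases smul_eq_zero.mp h2 with h | h
      · norm_num at h
      · exact hv1 h
  -- the two basic translations
  have hT1 : fN v₁ v₂ (Multiplicative.ofAdd (1, 0)) = b * c := by
    refine AffineEquiv.ext fun x => ?_
    simp only [AffineEquiv.coe_mul, Function.comp_apply]
    rw [fN_apply, hc, hb]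
    simp
    try abel
  have hT2 : fN v₁ v₂ (Multiplicative.ofAdd (0, 1)) = b * a := by
    refine AffineEquiv.ext fun x => ?_
    simp only [AffineEquiv.coe_mul, Function.comp_apply]
    rw [fN_apply, ha, hb]
    simp
    try abel
  have hfa : fH a ha2 (Multiplicative.ofAdd 1) = a := by
    simp only [fH, MonoidHom.coe_mk, OneHom.coe_mk]
    rw [if_neg]
    simp
  have hamem : a ∈ ({a, b, c} : Set G2) := by simp
  have hbmem : b ∈ ({a, b, c} : Set G2) := by simp
  have hcmem : c ∈ ({a, b, c} : Set G2) := by simp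
  -- range equals closure
  have hrange : Subgroup.closure ({a, b, c} : Set G2) = φ.range := by
    refine le_antisymm ((Subgroup.closure_le _).mpr ?_) ?_
    · rintro x (rfl | rfl | rfl)
      · exact ⟨⟨1, Multiplicative.ofAdd 1⟩, by
          rw [SemidirectProduct.mk_eq_inl_mul_inr, map_mul, hφinl, hφinr, map_one, one_mul, hfa]⟩
      · refine ⟨⟨Multiplicative.ofAdd (0, 1), Multiplicative.ofAdd 1⟩, ?_⟩
        rw [SemidirectProduct.mk_eq_inl_mul_inr, map_mul, hφinl, hφinr, hfa, hT2]
        rw [mul_assoc, ha2, mul_one]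
      · refine ⟨⟨Multiplicative.ofAdd (-1, 1), Multiplicative.ofAdd 1⟩, ?_⟩
        rw [SemidirectProduct.mk_eq_inl_mul_inr, map_mul, hφinl, hφinr, hfa]
        refine AffineEquiv.ext fun x => ?_
        simp only [AffineEquiv.coe_mul, Function.comp_apply]
        rw [ha, fN_apply, hc]
        simp
        abel
    · rintro x ⟨y, rfl⟩
      rw [← SemidirectProduct.inl_left_mul_inr_right y, map_mul, hφinl, hφinr]
      refine mul_mem ?_ ?_
      · set p := Multiplicative.toAdd y.left with hp
        have hy : y.left = Multiplicative.ofAdd (1, 0) ^ p.1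
            * Multiplicative.ofAdd (0, 1) ^ p.2 := by
          rw [← ofAdd_zsmul, ← ofAdd_zsmul, ← ofAdd_add]
          rw [hp, ← ofAdd_toAdd y.left]
          congr 1
          · rw [toAdd_ofAdd]
            ext <;> simp
        rw [hy, map_mul, map_zpow, map_zpow, hT1, hT2]
        exact mul_mem
          (zpow_mem (Subgroup.mul_mem _ (Subgroup.subset_closure hbmem)
            (Subgroup.subset_closure hcmem)) _)
          (zpow_mem (Subgroup.mul_mem _ (Subgroup.subset_closure hbmem)
            (Subgroup.subset_closure hamem)) _)
      · rcases hg01 y.right with hy | ⟨hy, _⟩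
        · rw [hy, map_one]; exact one_mem _
        · rw [hy, hfa]; exact Subgroup.subset_closure hamem
  exact ⟨(MulEquiv.subgroupCongr hrange).trans (MonoidHom.ofInjective hinj).symm⟩
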